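/- arXiv:2202.02495 — 2 statements merged into one kernel-verified Lean document; each statement's English description precedes it below -/
import Mathlib

section
/- Let q ∈ (1/2, 1), let g : Z × ℕ × ℕ → Z₁ be injective, and let (G₁, ℓ_{G₁}) and (G₂, ℓ_{G₂}) be labeled graphs with labels in Z. If d_WL^(k)((𝒳_q(G₁), ℓ_{G₁}^g), (𝒳_q(G₂), ℓ_{G₂}^g)) = 0 for each k = 0, 1, …, |V_{G₁}| + |V_{G₂}|, then d_WL((𝒳_q(G₁), ℓ_{G₁}^g), (𝒳_q(G₂), ℓ_{G₂}^g)) = 0, i.e., d_WL^(k) vanishes between these two LMMCs for every k ≥ 0. -/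
open scoped BigOperators NNReal

namespace WLGW

variable {X Y W : Type*}

/-- A probability mass function on a finite type. -/
def IsPMF [Fintype X] (p : X → ℝ) : Prop :=
  (∀ x, 0 ≤ p x) ∧ ∑ x, p x = 1

/-- `γ` is a coupling of `p` and `q`. -/
def IsCoupling [Fintype X] [Fintype Y] (p : X → ℝ) (q : Y → ℝ) (γ : X → Y → ℝ) : Prop :=
  (∀ x y, 0 ≤ γ x y) ∧ (∀ x, ∑ y, γ x y = p x) ∧ (∀ y, ∑ x, γ x y = q y)

/-- `(m, μ)` is a measure Markov chain: each `m x` is a pmf, and `μ` is a fully supported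
stationary pmf. -/
def IsMMC [Fintype X] (m : X → X → ℝ) (μ : X → ℝ) : Prop :=
  (∀ x, IsPMF (m x)) ∧ IsPMF μ ∧ (∀ x, 0 < μ x) ∧ (∀ x', ∑ x, m x x' * μ x = μ x')

/-- `dX` is a metric on the finite type `X`. -/
def IsMetricOn [Fintype X] (dX : X → X → ℝ) : Prop :=
  (∀ x, dX x x = 0) ∧ (∀ x y, dX x y = dX y x) ∧ (∀ x y, x ≠ y → 0 < dX x y) ∧
    (∀ x y z, dX x z ≤ dX x y + dX y z)

/-- The iterated Weisfeiler–Lehman cost `D_k`. -/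
noncomputable def costIter [Fintype X] [Fintype Y] (mX : X → X → ℝ) (mY : Y → Y → ℝ)
    (D0 : X → Y → ℝ) : ℕ → X → Y → ℝ
  | 0 => D0
  | k + 1 => fun x y => sInf {r : ℝ | ∃ γ : X → Y → ℝ, IsCoupling (mX x) (mY y) γ ∧
      r = ∑ x', ∑ y', costIter mX mY D0 k x' y' * γ x' y'}

/-- The Weisfeiler–Lehman distance of depth `k` between two labeled measure Markov chains. -/
noncomputable def dWL {Z : Type*} [PseudoMetricSpace Z] [Fintype X] [Fintype Y]
    (mX : X → X → ℝ) (μX : X → ℝ) (ℓX : X → Z)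
    (mY : Y → Y → ℝ) (μY : Y → ℝ) (ℓY : Y → Z) (k : ℕ) : ℝ :=
  sInf {r : ℝ | ∃ γ : X → Y → ℝ, IsCoupling μX μY γ ∧
      r = ∑ x, ∑ y, costIter mX mY (fun x y => dist (ℓX x) (ℓY y)) k x y * γ x y}

/-- The absolute Weisfeiler–Lehman distance. -/
noncomputable def dWLsup {Z : Type*} [PseudoMetricSpace Z] [Fintype X] [Fintype Y]
    (mX : X → X → ℝ) (μX : X → ℝ) (ℓX : X → Z)
    (mY : Y → Y → ℝ) (μY : Y → ℝ) (ℓY : Y → Z) : ℝ :=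
  ⨆ k : ℕ, dWL mX μX ℓX mY μY ℓY k

/-- Isomorphism of labeled measure Markov chains. -/
def LMMCIso {Z : Type*} [Fintype X] [Fintype Y]
    (mX : X → X → ℝ) (μX : X → ℝ) (ℓX : X → Z)
    (mY : Y → Y → ℝ) (μY : Y → ℝ) (ℓY : Y → Z) : Prop :=
  ∃ ψ : X ≃ Y, (∀ x, ℓY (ψ x) = ℓX x) ∧ (∀ x x', mY (ψ x) (ψ x') = mX x x') ∧
    (∀ x, μY (ψ x) = μX x)

/-- The `q`-Markov kernel of a finite simple graph. -/
noncomputable def graphKernel {V : Type*} [Fintype V] [DecidableEq V] (G : SimpleGraph V) [DecidableRel G.Adj]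
    (q : ℝ) (v v' : V) : ℝ :=
  if G.degree v = 0 then (if v' = v then 1 else 0)
  else (if v' = v then q else 0) + (if G.Adj v v' then (1 - q) / (G.degree v : ℝ) else 0)

/-- The stationary degree measure of a finite simple graph. -/
noncomputable def graphMu {V : Type*} [Fintype V] (G : SimpleGraph V) [DecidableRel G.Adj]
    (v : V) : ℝ :=
  ((max (G.degree v) 1 : ℕ) : ℝ) / ∑ v', ((max (G.degree v') 1 : ℕ) : ℝ)

/-- The type of depth-`k` Weisfeiler–Lehman labels over an initial label set `Z`. -/
def WLType (Z : Type*) : ℕ → Type _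
  | 0 => Z
  | k + 1 => WLType Z k × Multiset (WLType Z k)

/-- The Weisfeiler–Lehman label hierarchy `ℓ^k` of a labeled graph. -/
def wlLabel {V Z : Type*} [Fintype V] (G : SimpleGraph V) [DecidableRel G.Adj] (ℓ : V → Z) :
    (k : ℕ) → V → WLType Z k
  | 0 => ℓ
  | k + 1 => fun v => (wlLabel G ℓ k v, (G.neighborFinset v).val.map (wlLabel G ℓ k))

/-- The multiset `L_k((G, ℓ))` of depth-`k` WL labels of all vertices. -/
def wlMultiset {V Z : Type*} [Fintype V] (G : SimpleGraph V) [DecidableRel G.Adj]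
    (ℓ : V → Z) (k : ℕ) : Multiset (WLType Z k) :=
  Finset.univ.val.map (wlLabel G ℓ k)

/-- The WL test distinguishes two labeled graphs. -/
def WLDistinguishes {V₁ V₂ Z : Type*} [Fintype V₁] [Fintype V₂]
    (G₁ : SimpleGraph V₁) [DecidableRel G₁.Adj] (ℓ₁ : V₁ → Z)
    (G₂ : SimpleGraph V₂) [DecidableRel G₂.Adj] (ℓ₂ : V₂ → Z) : Prop :=
  ∃ k, wlMultiset G₁ ℓ₁ k ≠ wlMultiset G₂ ℓ₂ k

/-- The relabeling `ℓ^g(v) = g(ℓ(v), deg v, |V|)`. -/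
def relabel {V Z Z₁ : Type*} [Fintype V] (G : SimpleGraph V) [DecidableRel G.Adj]
    (ℓ : V → Z) (g : Z × ℕ × ℕ → Z₁) : V → Z₁ :=
  fun v => g (ℓ v, G.degree v, Fintype.card V)

/-- `kpow m k = m^{⊗k}`, the `k`-step Markov kernel (`kpow m 0` is the identity kernel). -/
def kpow [Fintype X] [DecidableEq X] (m : X → X → ℝ) : ℕ → X → X → ℝ
  | 0 => fun x x' => if x' = x then 1 else 0
  | k + 1 => fun x x'' => ∑ x', kpow m k x' x'' * m x x'

/-- The Wasserstein distance between the pushforwards `(ℓX)_# p` and `(ℓY)_# q`, expressed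
through couplings of `p` and `q`. -/
noncomputable def wassersteinCost {Z : Type*} [PseudoMetricSpace Z] [Fintype X] [Fintype Y]
    (ℓX : X → Z) (ℓY : Y → Z) (p : X → ℝ) (q : Y → ℝ) : ℝ :=
  sInf {r : ℝ | ∃ γ : X → Y → ℝ, IsCoupling p q γ ∧
      r = ∑ x, ∑ y, dist (ℓX x) (ℓY y) * γ x y}

/-- The lower bound `d_WLLB^(k)` for the WL distance. -/
noncomputable def dWLLB {Z : Type*} [PseudoMetricSpace Z] [Fintype X] [Fintype Y]
    [DecidableEq X] [DecidableEq Y]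
    (mX : X → X → ℝ) (μX : X → ℝ) (ℓX : X → Z)
    (mY : Y → Y → ℝ) (μY : Y → ℝ) (ℓY : Y → Z) (k : ℕ) : ℝ :=
  sInf {r : ℝ | ∃ γ : X → Y → ℝ, IsCoupling μX μY γ ∧
      r = ∑ x, ∑ y, wassersteinCost ℓX ℓY (kpow mX k x) (kpow mY k y) * γ x y}

/-- Dimension sequence of an MCNN: `mcnnDim d dims 0 = d`, then `dims`. -/
def mcnnDim (d : ℕ) (dims : ℕ → ℕ) : ℕ → ℕ
  | 0 => d
  | i + 1 => dims i

/-- A `k`-layer Markov chain neural network on `ℝ^d`-LMMCs: Lipschitz maps `φ_1, …, φ_{k+1}`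
followed by a continuous map `ψ`. -/
structure MCNN (d k : ℕ) where
  dims : ℕ → ℕ
  φ : (i : ℕ) → EuclideanSpace ℝ (Fin (mcnnDim d dims i)) →
      EuclideanSpace ℝ (Fin (mcnnDim d dims (i + 1)))
  φ_lip : ∀ i, ∃ K : ℝ≥0, LipschitzWith K (φ i)
  ψ : EuclideanSpace ℝ (Fin (mcnnDim d dims (k + 1))) → ℝ
  ψ_cont : Continuous ψ

/-- Labels after `j` layers of an MCNN (the map `F_{φ_j} ∘ ⋯ ∘ F_{φ_1}`). -/
noncomputable def mcnnLabel {X : Type*} [Fintype X] {d k : ℕ} (N : MCNN d k)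
    (m : X → X → ℝ) (ℓ : X → EuclideanSpace ℝ (Fin d)) :
    (j : ℕ) → X → EuclideanSpace ℝ (Fin (mcnnDim d N.dims j))
  | 0 => ℓ
  | j + 1 => fun x => ∑ x', m x x' • N.φ j (mcnnLabel N m ℓ j x')

/-- Evaluation of an MCNN on an `ℝ^d`-LMMC: `ψ ∘ S_{φ_{k+1}} ∘ F_{φ_k} ∘ ⋯ ∘ F_{φ_1}`. -/
noncomputable def mcnnEval {X : Type*} [Fintype X] {d k : ℕ} (N : MCNN d k)
    (m : X → X → ℝ) (μ : X → ℝ) (ℓ : X → EuclideanSpace ℝ (Fin d)) : ℝ :=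
  N.ψ (∑ x, μ x • N.φ k (mcnnLabel N m ℓ k x))

/-- `k`-step couplings between the Markov kernels `mX` and `mY` (defined for `k ≥ 1`). -/
def IsStepCoupling [Fintype X] [Fintype Y] (mX : X → X → ℝ) (mY : Y → Y → ℝ) :
    ℕ → (X → Y → X → Y → ℝ) → Prop
  | 0, _ => False
  | 1, ν => ∀ x y, IsCoupling (mX x) (mY y) (ν x y)
  | k + 2, ν => ∃ νk ν1 : X → Y → X → Y → ℝ,
      IsStepCoupling mX mY (k + 1) νk ∧ (∀ x y, IsCoupling (mX x) (mY y) (ν1 x y)) ∧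
      ν = fun x y x' y' => ∑ x'', ∑ y'', νk x'' y'' x' y' * ν1 x y x'' y''

/-- The `k`-distortion `dis^(k)(γ, ν)`. -/
def disk [Fintype X] [Fintype Y] (dX : X → X → ℝ) (dY : Y → Y → ℝ)
    (γ : X → Y → ℝ) (ν : X → Y → X → Y → ℝ) : ℝ :=
  ∑ x, ∑ y, ∑ x'', ∑ y'', ∑ x', ∑ y',
    |dX x x' - dY y y'| * ν x'' y'' x' y' * γ x'' y'' * γ x y

/-- The `k`-Gromov–Wasserstein distance between Markov chain metric spaces. -/
noncomputable def dGWk [Fintype X] [Fintype Y]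
    (mX : X → X → ℝ) (dX : X → X → ℝ) (μX : X → ℝ)
    (mY : Y → Y → ℝ) (dY : Y → Y → ℝ) (μY : Y → ℝ) (k : ℕ) : ℝ :=
  sInf {r : ℝ | ∃ (γ : X → Y → ℝ) (ν : X → Y → X → Y → ℝ),
      IsCoupling μX μY γ ∧ IsStepCoupling mX mY k ν ∧ r = disk dX dY γ ν}

/-- The absolute Gromov–Wasserstein distance between MCMSs: `sup_{k ≥ 1} d_GW^(k)`. -/
noncomputable def dGWMCMS [Fintype X] [Fintype Y]
    (mX : X → X → ℝ) (dX : X → X → ℝ) (μX : X → ℝ)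
    (mY : Y → Y → ℝ) (dY : Y → Y → ℝ) (μY : Y → ℝ) : ℝ :=
  ⨆ k : ℕ, dGWk mX dX μX mY dY μY (k + 1)

/-- Isomorphism of Markov chain metric spaces. -/
def MCMSIso [Fintype X] [Fintype Y]
    (mX : X → X → ℝ) (dX : X → X → ℝ) (μX : X → ℝ)
    (mY : Y → Y → ℝ) (dY : Y → Y → ℝ) (μY : Y → ℝ) : Prop :=
  ∃ ψ : X ≃ Y, (∀ x x', dY (ψ x) (ψ x') = dX x x') ∧
    (∀ x x', mY (ψ x) (ψ x') = mX x x') ∧ (∀ x, μY (ψ x) = μX x)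

/-- The decoupled Gromov–Wasserstein distance between finite metric measure spaces. -/
noncomputable def dGWbi [Fintype X] [Fintype Y]
    (dX : X → X → ℝ) (μX : X → ℝ) (dY : Y → Y → ℝ) (μY : Y → ℝ) : ℝ :=
  sInf {r : ℝ | ∃ γ γ' : X → Y → ℝ, IsCoupling μX μY γ ∧ IsCoupling μX μY γ' ∧
      r = ∑ x, ∑ y, ∑ x', ∑ y', |dX x x' - dY y y'| * γ' x' y' * γ x y}

/-- `k`-step couplings between the measures `μX` and `μY`
(`k = 0` gives ordinary couplings). -/
def IsMeasureStepCoupling [Fintype X] [Fintype Y] (mX : X → X → ℝ) (mY : Y → Y → ℝ)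
    (μX : X → ℝ) (μY : Y → ℝ) : ℕ → (X → Y → ℝ) → Prop
  | 0, γ => IsCoupling μX μY γ
  | k + 1, γk => ∃ (γ : X → Y → ℝ) (ν : X → Y → X → Y → ℝ),
      IsCoupling μX μY γ ∧ IsStepCoupling mX mY (k + 1) ν ∧
      γk = fun x' y' => ∑ x, ∑ y, ν x y x' y' * γ x y

/-- The WWL label iteration. -/
noncomputable def wwlLabel {V : Type*} [Fintype V] {d : ℕ} (G : SimpleGraph V)
    [DecidableRel G.Adj] (ℓ : V → EuclideanSpace ℝ (Fin d)) :
    ℕ → V → EuclideanSpace ℝ (Fin d)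
  | 0 => ℓ
  | i + 1 => fun v => (1 / 2 : ℝ) •
      (wwlLabel G ℓ i v + ((G.degree v : ℝ))⁻¹ • ∑ v' ∈ G.neighborFinset v, wwlLabel G ℓ i v')

/-- The stacked WWL label `L^k_G = (ℓ^0, …, ℓ^k)`, valued in Euclidean `ℝ^{d(k+1)}`. -/
noncomputable def stackedLabel {V : Type*} [Fintype V] {d : ℕ} (G : SimpleGraph V)
    [DecidableRel G.Adj] (ℓ : V → EuclideanSpace ℝ (Fin d)) (k : ℕ) (v : V) :
    EuclideanSpace ℝ (Fin (k + 1) × Fin d) :=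
  WithLp.toLp 2 (fun p => wwlLabel G ℓ (p.1 : ℕ) v p.2)

section AuxDev

open Finset

variable {A B E : Type*} [Fintype A] [Fintype B] [Fintype E]

/-- The set of transport costs between `p` and `r` for cost `c`. -/
def costSet (c : A → B → ℝ) (p : A → ℝ) (r : B → ℝ) : Set ℝ :=
  {x : ℝ | ∃ γ : A → B → ℝ, IsCoupling p r γ ∧ x = ∑ a, ∑ b, c a b * γ a b}

lemma costIter_succ_eq {X Y : Type*} [Fintype X] [Fintype Y] (mX : X → X → ℝ)
    (mY : Y → Y → ℝ) (D0 : X → Y → ℝ) (k : ℕ) (x : X) (y : Y) :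
    costIter mX mY D0 (k + 1) x y = sInf (costSet (costIter mX mY D0 k) (mX x) (mY y)) := rfl

lemma dWL_eq {Z : Type*} [PseudoMetricSpace Z] {X Y : Type*} [Fintype X] [Fintype Y]
    (mX : X → X → ℝ) (μX : X → ℝ) (ℓX : X → Z)
    (mY : Y → Y → ℝ) (μY : Y → ℝ) (ℓY : Y → Z) (k : ℕ) :
    dWL mX μX ℓX mY μY ℓY k
      = sInf (costSet (costIter mX mY (fun x y => dist (ℓX x) (ℓY y)) k) μX μY) := rfl

lemma cost_mem_costSet (c : A → B → ℝ) {p : A → ℝ} {r : B → ℝ} {γ : A → B → ℝ}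
    (hγ : IsCoupling p r γ) : (∑ a, ∑ b, c a b * γ a b) ∈ costSet c p r := ⟨γ, hγ, rfl⟩

lemma costSet_nonneg {c : A → B → ℝ} (hc : ∀ a b, 0 ≤ c a b) {p : A → ℝ} {r : B → ℝ} {x : ℝ}
    (hx : x ∈ costSet c p r) : 0 ≤ x := by
  obtain ⟨γ, hγ, rfl⟩ := hx
  exact Finset.sum_nonneg fun a _ => Finset.sum_nonneg fun b _ =>
    mul_nonneg (hc a b) (hγ.1 a b)

lemma bddBelow_costSet {c : A → B → ℝ} (hc : ∀ a b, 0 ≤ c a b) (p : A → ℝ) (r : B → ℝ) :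
    BddBelow (costSet c p r) := ⟨0, fun _ hx => costSet_nonneg hc hx⟩

lemma sInf_costSet_nonneg {c : A → B → ℝ} (hc : ∀ a b, 0 ≤ c a b) (p : A → ℝ) (r : B → ℝ) :
    0 ≤ sInf (costSet c p r) :=
  Real.sInf_nonneg fun _ hx => costSet_nonneg hc hx

lemma isCoupling_prod {p : A → ℝ} {r : B → ℝ} (hp : IsPMF p) (hr : IsPMF r) :
    IsCoupling p r (fun a b => p a * r b) := by
  refine ⟨fun a b => mul_nonneg (hp.1 a) (hr.1 b), fun a => ?_, fun b => ?_⟩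
  · rw [← Finset.mul_sum, hr.2, mul_one]
  · rw [← Finset.sum_mul, hp.2, one_mul]

lemma costSet_nonempty {c : A → B → ℝ} {p : A → ℝ} {r : B → ℝ} (hp : IsPMF p) (hr : IsPMF r) :
    (costSet c p r).Nonempty := ⟨_, cost_mem_costSet c (isCoupling_prod hp hr)⟩

lemma sInf_costSet_le {c : A → B → ℝ} (hc : ∀ a b, 0 ≤ c a b) {p : A → ℝ} {r : B → ℝ}
    {γ : A → B → ℝ} (hγ : IsCoupling p r γ) :
    sInf (costSet c p r) ≤ ∑ a, ∑ b, c a b * γ a b :=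
  csInf_le (bddBelow_costSet hc p r) (cost_mem_costSet c hγ)

lemma le_sInf_costSet {c : A → B → ℝ} {p : A → ℝ} {r : B → ℝ} {t : ℝ}
    (hne : (costSet c p r).Nonempty)
    (h : ∀ γ : A → B → ℝ, IsCoupling p r γ → t ≤ ∑ a, ∑ b, c a b * γ a b) :
    t ≤ sInf (costSet c p r) :=
  le_csInf hne (by rintro x ⟨γ, hγ, rfl⟩; exact h γ hγ)

lemma exists_coupling_cost_lt {c : A → B → ℝ} {p : A → ℝ} {r : B → ℝ}
    (hp : IsPMF p) (hr : IsPMF r) (h0 : sInf (costSet c p r) = 0) {ε : ℝ} (hε : 0 < ε) :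
    ∃ γ : A → B → ℝ, IsCoupling p r γ ∧ ∑ a, ∑ b, c a b * γ a b < ε := by
  obtain ⟨x, hx, hlt⟩ := exists_lt_of_csInf_lt (costSet_nonempty hp hr) (by rw [h0]; exact hε)
  obtain ⟨γ, hγ, rfl⟩ := hx
  exact ⟨γ, hγ, hlt⟩

lemma sInf_costSet_eq_zero_of_dom {c c' : A → B → ℝ} {p : A → ℝ} {r : B → ℝ} {C : ℝ}
    (hC : 0 ≤ C) (hdom : ∀ a b, c a b ≤ C * c' a b)
    (hc : ∀ a b, 0 ≤ c a b) (hc' : ∀ a b, 0 ≤ c' a b)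
    (hp : IsPMF p) (hr : IsPMF r)
    (h0 : sInf (costSet c' p r) = 0) : sInf (costSet c p r) = 0 := by
  refine le_antisymm ?_ (sInf_costSet_nonneg hc p r)
  by_contra hlt
  push_neg at hlt
  have hCp : (0:ℝ) < C + 1 := by linarith
  obtain ⟨γ, hγ, hcost⟩ := exists_coupling_cost_lt hp hr h0
    (ε := sInf (costSet c p r) / (C + 1)) (by positivity)
  have h1 : sInf (costSet c p r) ≤ ∑ a, ∑ b, c a b * γ a b := sInf_costSet_le hc hγ
  have h2 : ∑ a, ∑ b, c a b * γ a b ≤ (C + 1) * ∑ a, ∑ b, c' a b * γ a b := by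
    rw [Finset.mul_sum]
    refine Finset.sum_le_sum fun a _ => ?_
    rw [Finset.mul_sum]
    refine Finset.sum_le_sum fun b _ => ?_
    rw [← mul_assoc]
    refine mul_le_mul_of_nonneg_right ?_ (hγ.1 a b)
    calc c a b ≤ C * c' a b := hdom a b
      _ ≤ (C + 1) * c' a b := mul_le_mul_of_nonneg_right (by linarith) (hc' a b)
  have h3 : (C + 1) * (∑ a, ∑ b, c' a b * γ a b) < (C + 1) * (sInf (costSet c p r) / (C + 1)) :=
    mul_lt_mul_of_pos_left hcost hCp
  rw [mul_div_cancel₀ _ (ne_of_gt hCp)] at h3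
  linarith

lemma exists_dom {ι : Type*} [Fintype ι] {f g : ι → ℝ} (hf : ∀ i, 0 ≤ f i)
    (hg : ∀ i, 0 ≤ g i) (hz : ∀ i, g i = 0 → f i = 0) :
    ∃ C : ℝ, 0 ≤ C ∧ ∀ i, f i ≤ C * g i := by
  classical
  set s := Finset.univ.filter (fun i => g i ≠ 0) with hs
  rcases Finset.eq_empty_or_nonempty s with he | hne
  · refine ⟨0, le_refl _, fun i => ?_⟩
    have hgi : g i = 0 := by
      by_contra hgi
      have : i ∈ s := by simp [hs, hgi]
      simp [he] at this
    rw [hz i hgi, zero_mul]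
  · obtain ⟨i0, hi0, hmin⟩ := Finset.exists_min_image s g hne
    have hgi0 : g i0 ≠ 0 := by
      have := hi0; rw [hs, Finset.mem_filter] at this; exact this.2
    have hδ : 0 < g i0 := lt_of_le_of_ne (hg i0) (Ne.symm hgi0)
    have hM : (0:ℝ) ≤ ∑ j, f j := Finset.sum_nonneg fun j _ => hf j
    refine ⟨(∑ j, f j) / g i0, by positivity, fun i => ?_⟩
    by_cases hgi : g i = 0
    · rw [hz i hgi, hgi, mul_zero]
    · have h1 : f i ≤ ∑ j, f j := Finset.single_le_sum (fun j _ => hf j) (Finset.mem_univ i)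
      have h2 : g i0 ≤ g i := hmin i (by simp [hs, hgi])
      calc f i ≤ ∑ j, f j := h1
        _ = (∑ j, f j) / g i0 * g i0 := by field_simp
        _ ≤ (∑ j, f j) / g i0 * g i := by
            exact mul_le_mul_of_nonneg_left h2 (by positivity)

end AuxDev

section AuxCoupling

open Finset

variable {A B E : Type*} [Fintype A] [Fintype B] [Fintype E]

set_option linter.unusedSectionVars false

lemma coupling_entry_ge {p : A → ℝ} {r : B → ℝ} {γ : A → B → ℝ}
    (hγ : IsCoupling p r γ) (hr : IsPMF r) (a : A) (b : B) :
    p a + r b - 1 ≤ γ a b := by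
  classical
  have h1 : ∑ b' ∈ Finset.univ.erase b, γ a b' ≤ ∑ b' ∈ Finset.univ.erase b, r b' := by
    refine Finset.sum_le_sum fun b' _ => ?_
    rw [← hγ.2.2 b']
    exact Finset.single_le_sum (fun a' _ => hγ.1 a' b') (Finset.mem_univ a)
  have h2 : γ a b + ∑ b' ∈ Finset.univ.erase b, γ a b' = p a := by
    rw [← hγ.2.1 a]
    exact Finset.add_sum_erase _ _ (Finset.mem_univ b)
  have h3 : r b + ∑ b' ∈ Finset.univ.erase b, r b' = 1 := by
    rw [← hr.2]
    exact Finset.add_sum_erase _ _ (Finset.mem_univ b)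
  linarith

lemma coupling_zero_col {p : A → ℝ} {r : B → ℝ} {γ : A → B → ℝ}
    (hγ : IsCoupling p r γ) {b : B} (hb : r b = 0) (a : A) : γ a b = 0 := by
  have hsum : ∑ a', γ a' b = 0 := by rw [hγ.2.2 b, hb]
  exact (Finset.sum_eq_zero_iff_of_nonneg (fun a' _ => hγ.1 a' b)).1 hsum a (Finset.mem_univ a)

lemma coupling_zero_row {p : A → ℝ} {r : B → ℝ} {γ : A → B → ℝ}
    (hγ : IsCoupling p r γ) {a : A} (ha : p a = 0) (b : B) : γ a b = 0 := by
  have hsum : ∑ b', γ a b' = 0 := by rw [hγ.2.1 a, ha]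
  exact (Finset.sum_eq_zero_iff_of_nonneg (fun b' _ => hγ.1 a b')).1 hsum b (Finset.mem_univ b)

/-- Gluing of two couplings along the common marginal `r`. -/
noncomputable def glueCoupling (r : B → ℝ) (γ1 : A → B → ℝ) (γ2 : B → E → ℝ) : A → E → ℝ :=
  fun a e => ∑ b, (if r b = 0 then 0 else (r b)⁻¹) * (γ1 a b * γ2 b e)

lemma glue_nonneg {r : B → ℝ} {γ1 : A → B → ℝ} {γ2 : B → E → ℝ}
    (h1 : ∀ a b, 0 ≤ γ1 a b) (h2 : ∀ b e, 0 ≤ γ2 b e) (hr : ∀ b, 0 ≤ r b) (a : A) (e : E) :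
    0 ≤ glueCoupling r γ1 γ2 a e := by
  refine Finset.sum_nonneg fun b _ => ?_
  refine mul_nonneg ?_ (mul_nonneg (h1 a b) (h2 b e))
  split
  · exact le_refl 0
  · exact inv_nonneg.2 (hr b)

lemma isCoupling_glue {p : A → ℝ} {r : B → ℝ} {s : E → ℝ} {γ1 : A → B → ℝ} {γ2 : B → E → ℝ}
    (h1 : IsCoupling p r γ1) (h2 : IsCoupling r s γ2) :
    IsCoupling p s (glueCoupling r γ1 γ2) := by
  have hrnn : ∀ b, 0 ≤ r b := fun b => by
    rw [← h1.2.2 b]; exact Finset.sum_nonneg fun a _ => h1.1 a b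
  refine ⟨glue_nonneg h1.1 h2.1 hrnn, fun a => ?_, fun e => ?_⟩
  · simp only [glueCoupling]
    rw [Finset.sum_comm]
    have key : ∀ b : B, ∑ e, (if r b = 0 then 0 else (r b)⁻¹) * (γ1 a b * γ2 b e) = γ1 a b := by
      intro b
      by_cases hb : r b = 0
      · simp [hb, coupling_zero_col h1 hb]
      · rw [← Finset.mul_sum, ← Finset.mul_sum, h2.2.1 b, if_neg hb,
          mul_comm (γ1 a b) (r b), ← mul_assoc, inv_mul_cancel₀ hb, one_mul]
    rw [Finset.sum_congr rfl fun b _ => key b, h1.2.1 a]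
  · simp only [glueCoupling]
    rw [Finset.sum_comm]
    have key : ∀ b : B, ∑ a, (if r b = 0 then 0 else (r b)⁻¹) * (γ1 a b * γ2 b e) = γ2 b e := by
      intro b
      by_cases hb : r b = 0
      · simp [hb, coupling_zero_row h2 hb]
      · have h4 : ∀ a, (if r b = 0 then 0 else (r b)⁻¹) * (γ1 a b * γ2 b e)
            = γ1 a b * ((r b)⁻¹ * γ2 b e) := by
          intro a; rw [if_neg hb]; ring
        rw [Finset.sum_congr rfl fun a _ => h4 a, ← Finset.sum_mul, h1.2.2 b,
          ← mul_assoc, mul_inv_cancel₀ hb, one_mul]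
    rw [Finset.sum_congr rfl fun b _ => key b, h2.2.2 e]

end AuxCoupling

section AuxD

open Finset

set_option linter.unusedSectionVars false

variable {T : Type*} [Fintype T]

lemma costIter_nonneg {X Y : Type*} [Fintype X] [Fintype Y] {mX : X → X → ℝ}
    {mY : Y → Y → ℝ} {D0 : X → Y → ℝ} (hD0 : ∀ x y, 0 ≤ D0 x y) :
    ∀ k x y, 0 ≤ costIter mX mY D0 k x y := by
  intro k
  induction k with
  | zero => exact hD0
  | succ k ih =>
    intro x y
    rw [costIter_succ_eq]
    exact sInf_costSet_nonneg ih _ _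

lemma costIter_refl {m : T → T → ℝ} {d0 : T → T → ℝ} (hm : ∀ t, IsPMF (m t))
    (hd0 : ∀ a b, 0 ≤ d0 a b) (hrefl : ∀ t, d0 t t = 0) :
    ∀ k t, costIter m m d0 k t t = 0 := by
  classical
  intro k
  induction k with
  | zero => exact hrefl
  | succ k ih =>
    intro t
    refine le_antisymm ?_ (costIter_nonneg hd0 _ _ _)
    rw [costIter_succ_eq]
    have hγ : IsCoupling (m t) (m t) (fun x x' => if x' = x then m t x else 0) := by
      refine ⟨fun x x' => ?_, fun x => ?_, fun x' => ?_⟩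
      · dsimp only; split
        · exact (hm t).1 x
        · exact le_refl 0
      · simp
      · simp
    refine le_trans (sInf_costSet_le (costIter_nonneg hd0 k) hγ) (le_of_eq ?_)
    refine Finset.sum_eq_zero fun x _ => ?_
    simp [mul_ite, ih x]

lemma costSet_swap {A B : Type*} [Fintype A] [Fintype B] (c : A → B → ℝ)
    (p : A → ℝ) (r : B → ℝ) :
    costSet (fun b a => c a b) r p = costSet c p r := by
  ext x
  constructor
  · rintro ⟨γ, hγ, rfl⟩
    exact ⟨fun a b => γ b a, ⟨fun a b => hγ.1 b a, hγ.2.2, hγ.2.1⟩, Finset.sum_comm⟩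
  · rintro ⟨γ, hγ, rfl⟩
    exact ⟨fun b a => γ a b, ⟨fun b a => hγ.1 a b, hγ.2.2, hγ.2.1⟩, Finset.sum_comm⟩

lemma costIter_symm {m : T → T → ℝ} {d0 : T → T → ℝ}
    (hsymm : ∀ a b, d0 a b = d0 b a) :
    ∀ k a b, costIter m m d0 k a b = costIter m m d0 k b a := by
  intro k
  induction k with
  | zero => exact hsymm
  | succ k ih =>
    intro a b
    rw [costIter_succ_eq, costIter_succ_eq,
      ← costSet_swap (costIter m m d0 k) (m b) (m a),
      show (fun (b' a' : T) => costIter m m d0 k a' b') = costIter m m d0 k from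
        funext fun b' => funext fun a' => ih a' b']

lemma costIter_zero_anti {m : T → T → ℝ} {d0 : T → T → ℝ} {q : ℝ}
    (hm : ∀ t, IsPMF (m t)) (hd0 : ∀ a b, 0 ≤ d0 a b)
    (hself : ∀ t, q ≤ m t t) (hq : 1 / 2 < q) {k : ℕ} {a b : T}
    (h : costIter m m d0 (k + 1) a b = 0) : costIter m m d0 k a b = 0 := by
  have hD := costIter_nonneg (mX := m) (mY := m) hd0
  have key : (2 * q - 1) * costIter m m d0 k a b ≤ costIter m m d0 (k + 1) a b := by
    rw [costIter_succ_eq]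
    refine le_sInf_costSet (costSet_nonempty (hm a) (hm b)) fun γ hγ => ?_
    have hab : 2 * q - 1 ≤ γ a b := by
      have h1 := coupling_entry_ge hγ (hm b) a b
      have h2 := hself a
      have h3 := hself b
      linarith
    have hsingle : costIter m m d0 k a b * γ a b
        ≤ ∑ x, ∑ y, costIter m m d0 k x y * γ x y := by
      refine le_trans (Finset.single_le_sum (f := fun y => costIter m m d0 k a y * γ a y)
        (fun y _ => mul_nonneg (hD k a y) (hγ.1 a y)) (Finset.mem_univ b)) ?_
      exact Finset.single_le_sum (f := fun x => ∑ y, costIter m m d0 k x y * γ x y)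
        (fun x _ => Finset.sum_nonneg fun y _ => mul_nonneg (hD k x y) (hγ.1 x y))
        (Finset.mem_univ a)
    calc (2 * q - 1) * costIter m m d0 k a b
        ≤ γ a b * costIter m m d0 k a b :=
          mul_le_mul_of_nonneg_right hab (hD k a b)
      _ = costIter m m d0 k a b * γ a b := mul_comm _ _
      _ ≤ _ := hsingle
  have h2 : (2 * q - 1) * costIter m m d0 k a b ≤ 0 := by rw [← h]; exact key
  nlinarith [hD k a b]

lemma glue_cost_le {p r s : T → ℝ} {γ1 γ2 : T → T → ℝ}
    (h1 : IsCoupling p r γ1) (h2 : IsCoupling r s γ2)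
    (D : T → T → ℝ) (hD : ∀ a b, 0 ≤ D a b) {C : ℝ} (hC : 0 ≤ C)
    (hdom : ∀ x y z, D x z ≤ C * (D x y + D y z)) :
    ∑ x, ∑ z, D x z * glueCoupling r γ1 γ2 x z ≤
      C * ((∑ x, ∑ y, D x y * γ1 x y) + (∑ y, ∑ z, D y z * γ2 y z)) := by
  classical
  set e : T → ℝ := fun b => if r b = 0 then 0 else (r b)⁻¹ with he
  have hrnn : ∀ b, 0 ≤ r b := fun b => by
    rw [← h1.2.2 b]; exact Finset.sum_nonneg fun a _ => h1.1 a b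
  have hen : ∀ b, 0 ≤ e b := fun b => by
    rw [he]; dsimp only; split
    · exact le_refl 0
    · exact inv_nonneg.2 (hrnn b)
  have hw : ∀ x y z, 0 ≤ e y * (γ1 x y * γ2 y z) := fun x y z =>
    mul_nonneg (hen y) (mul_nonneg (h1.1 x y) (h2.1 y z))
  -- T1 : the γ1-part
  have T1 : ∑ x, ∑ z, ∑ y, D x y * (e y * (γ1 x y * γ2 y z))
      ≤ ∑ x, ∑ y, D x y * γ1 x y := by
    have step : ∀ x, ∑ z, ∑ y, D x y * (e y * (γ1 x y * γ2 y z))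
        = ∑ y, (D x y * (e y * γ1 x y)) * r y := by
      intro x
      rw [Finset.sum_comm]
      refine Finset.sum_congr rfl fun y _ => ?_
      rw [← h2.2.1 y, Finset.mul_sum]
      exact Finset.sum_congr rfl fun z _ => by ring
    rw [Finset.sum_congr rfl fun x _ => step x]
    refine Finset.sum_le_sum fun x _ => Finset.sum_le_sum fun y _ => ?_
    by_cases hy : r y = 0
    · rw [hy, mul_zero]
      exact mul_nonneg (hD x y) (h1.1 x y)
    · rw [he]; dsimp only; rw [if_neg hy]
      rw [show D x y * ((r y)⁻¹ * γ1 x y) * r y = D x y * γ1 x y * ((r y)⁻¹ * r y) by ring,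
        inv_mul_cancel₀ hy, mul_one]
  -- T2 : the γ2-part
  have T2 : ∑ x, ∑ z, ∑ y, D y z * (e y * (γ1 x y * γ2 y z))
      ≤ ∑ y, ∑ z, D y z * γ2 y z := by
    have step : ∑ x, ∑ z, ∑ y, D y z * (e y * (γ1 x y * γ2 y z))
        = ∑ z, ∑ y, (D y z * (e y * γ2 y z)) * r y := by
      rw [Finset.sum_comm]
      refine Finset.sum_congr rfl fun z _ => ?_
      rw [Finset.sum_comm]
      refine Finset.sum_congr rfl fun y _ => ?_
      rw [← h1.2.2 y, Finset.mul_sum]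
      exact Finset.sum_congr rfl fun x _ => by ring
    rw [step, Finset.sum_comm]
    refine Finset.sum_le_sum fun y _ => Finset.sum_le_sum fun z _ => ?_
    by_cases hy : r y = 0
    · rw [hy, mul_zero]
      exact mul_nonneg (hD y z) (h2.1 y z)
    · rw [he]; dsimp only; rw [if_neg hy]
      rw [show D y z * ((r y)⁻¹ * γ2 y z) * r y = D y z * γ2 y z * ((r y)⁻¹ * r y) by ring,
        inv_mul_cancel₀ hy, mul_one]
  have expand : ∑ x, ∑ z, D x z * glueCoupling r γ1 γ2 x z
      = ∑ x, ∑ z, ∑ y, D x z * (e y * (γ1 x y * γ2 y z)) := by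
    refine Finset.sum_congr rfl fun x _ => Finset.sum_congr rfl fun z _ => ?_
    rw [glueCoupling, Finset.mul_sum]
  rw [expand]
  have bound : ∑ x, ∑ z, ∑ y, D x z * (e y * (γ1 x y * γ2 y z))
      ≤ ∑ x, ∑ z, ∑ y, (C * (D x y + D y z)) * (e y * (γ1 x y * γ2 y z)) := by
    refine Finset.sum_le_sum fun x _ => Finset.sum_le_sum fun z _ =>
      Finset.sum_le_sum fun y _ => ?_
    exact mul_le_mul_of_nonneg_right (hdom x y z) (hw x y z)
  refine le_trans bound ?_
  have split : ∑ x, ∑ z, ∑ y, (C * (D x y + D y z)) * (e y * (γ1 x y * γ2 y z))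
      = C * ((∑ x, ∑ z, ∑ y, D x y * (e y * (γ1 x y * γ2 y z)))
          + (∑ x, ∑ z, ∑ y, D y z * (e y * (γ1 x y * γ2 y z)))) := by
    rw [mul_add, Finset.mul_sum, Finset.mul_sum, ← Finset.sum_add_distrib]
    refine Finset.sum_congr rfl fun x _ => ?_
    rw [Finset.mul_sum, Finset.mul_sum, ← Finset.sum_add_distrib]
    refine Finset.sum_congr rfl fun z _ => ?_
    rw [Finset.mul_sum, Finset.mul_sum, ← Finset.sum_add_distrib]
    refine Finset.sum_congr rfl fun y _ => by ring
  rw [split]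
  exact mul_le_mul_of_nonneg_left (add_le_add T1 T2) hC

end AuxD

section AuxStab

open Finset

set_option linter.unusedSectionVars false

variable {T : Type*} [Fintype T] {m : T → T → ℝ} {d0 : T → T → ℝ} {q : ℝ}

lemma costIter_trans_zero (hm : ∀ t, IsPMF (m t)) (hd0 : ∀ a b, 0 ≤ d0 a b)
    (hd0t : ∀ a b c, d0 a b = 0 → d0 b c = 0 → d0 a c = 0) :
    ∀ k a b c, costIter m m d0 k a b = 0 → costIter m m d0 k b c = 0 →
      costIter m m d0 k a c = 0 := by
  intro k
  induction k with
  | zero => exact hd0t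
  | succ k ih =>
    intro a b c hab hbc
    have hD := costIter_nonneg (mX := m) (mY := m) hd0
    obtain ⟨C, hC0, hCdom⟩ := exists_dom (ι := T × T × T)
      (f := fun p => costIter m m d0 k p.1 p.2.2)
      (g := fun p => costIter m m d0 k p.1 p.2.1 + costIter m m d0 k p.2.1 p.2.2)
      (fun p => hD k _ _) (fun p => add_nonneg (hD k _ _) (hD k _ _))
      (fun p hp => by
        have hp' : costIter m m d0 k p.1 p.2.1 + costIter m m d0 k p.2.1 p.2.2 = 0 := hp
        have h1 : costIter m m d0 k p.1 p.2.1 = 0 := by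
          have := hD k p.1 p.2.1; have := hD k p.2.1 p.2.2; linarith
        have h2 : costIter m m d0 k p.2.1 p.2.2 = 0 := by
          have := hD k p.1 p.2.1; have := hD k p.2.1 p.2.2; linarith
        exact ih _ _ _ h1 h2)
    refine le_antisymm ?_ (hD (k + 1) a c)
    by_contra hpos
    push_neg at hpos
    set P := costIter m m d0 (k + 1) a c with hP
    have hCp : (0:ℝ) < 2 * (C + 1) := by linarith
    have hε : 0 < P / (2 * (C + 1)) := by positivity
    rw [costIter_succ_eq] at hab hbc
    obtain ⟨γ1, hγ1, hc1⟩ := exists_coupling_cost_lt (hm a) (hm b) hab hε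
    obtain ⟨γ2, hγ2, hc2⟩ := exists_coupling_cost_lt (hm b) (hm c) hbc hε
    have hglue := isCoupling_glue hγ1 hγ2
    have hle : P ≤ ∑ x, ∑ z, costIter m m d0 k x z * glueCoupling (m b) γ1 γ2 x z := by
      rw [hP, costIter_succ_eq]
      exact sInf_costSet_le (hD k) hglue
    have hbound := glue_cost_le hγ1 hγ2 (costIter m m d0 k) (hD k) hC0
      (fun x y z => hCdom (x, y, z))
    have hfinal : ∑ x, ∑ z, costIter m m d0 k x z * glueCoupling (m b) γ1 γ2 x z
        ≤ C * (P / (2 * (C + 1))) * 2 := by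
      refine le_trans hbound ?_
      have : (∑ x, ∑ y, costIter m m d0 k x y * γ1 x y)
          + (∑ y, ∑ z, costIter m m d0 k y z * γ2 y z) < 2 * (P / (2 * (C + 1))) := by
        linarith
      calc C * ((∑ x, ∑ y, costIter m m d0 k x y * γ1 x y)
            + (∑ y, ∑ z, costIter m m d0 k y z * γ2 y z))
          ≤ C * (2 * (P / (2 * (C + 1)))) := by
            rcases eq_or_lt_of_le hC0 with h | h
            · rw [← h]; simp
            · exact le_of_lt (mul_lt_mul_of_pos_left this h)
        _ = C * (P / (2 * (C + 1))) * 2 := by ring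
    have hPP : P ≤ C * (P / (2 * (C + 1))) * 2 := le_trans hle hfinal
    have : C * (P / (2 * (C + 1))) * 2 = P * (C / (C + 1)) := by
      field_simp
    rw [this] at hPP
    have hfrac : C / (C + 1) < 1 := by
      rw [div_lt_one (by linarith)]
      linarith
    nlinarith

lemma costIter_stab_step (hm : ∀ t, IsPMF (m t)) (hd0 : ∀ a b, 0 ≤ d0 a b) {k : ℕ}
    (hiff : ∀ a b, costIter m m d0 k a b = 0 → costIter m m d0 (k + 1) a b = 0) :
    ∀ a b, costIter m m d0 (k + 1) a b = 0 → costIter m m d0 (k + 2) a b = 0 := by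
  have hD := costIter_nonneg (mX := m) (mY := m) hd0
  obtain ⟨C, hC0, hCdom⟩ := exists_dom (ι := T × T)
    (f := fun p => costIter m m d0 (k + 1) p.1 p.2)
    (g := fun p => costIter m m d0 k p.1 p.2)
    (fun p => hD (k + 1) _ _) (fun p => hD k _ _)
    (fun p hp => hiff p.1 p.2 hp)
  intro a b hab
  rw [costIter_succ_eq] at hab ⊢
  exact sInf_costSet_eq_zero_of_dom hC0 (fun x y => hCdom (x, y))
    (hD (k + 1)) (hD k) (hm a) (hm b) hab

lemma costIter_stable_chain (hm : ∀ t, IsPMF (m t)) (hd0 : ∀ a b, 0 ≤ d0 a b) {k0 : ℕ}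
    (h0 : ∀ a b, costIter m m d0 k0 a b = 0 → costIter m m d0 (k0 + 1) a b = 0) :
    ∀ j, k0 ≤ j → ∀ a b, costIter m m d0 k0 a b = 0 → costIter m m d0 j a b = 0 := by
  have step : ∀ j, k0 ≤ j →
      ∀ a b, costIter m m d0 j a b = 0 → costIter m m d0 (j + 1) a b = 0 := by
    intro j hj
    induction j with
    | zero =>
      have : k0 = 0 := Nat.le_zero.1 hj
      subst this; exact h0
    | succ j ihj =>
      rcases Nat.lt_or_ge k0 (j + 1) with hlt | hge
      · exact costIter_stab_step hm hd0 (ihj (Nat.lt_succ_iff.1 hlt))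
      · have : k0 = j + 1 := le_antisymm hj hge
        subst this; exact h0
  intro j hj
  induction j with
  | zero =>
    have : k0 = 0 := Nat.le_zero.1 hj
    subst this; exact fun a b h => h
  | succ j ihj =>
    rcases Nat.lt_or_ge k0 (j + 1) with hlt | hge
    · intro a b h
      have hj' : k0 ≤ j := Nat.lt_succ_iff.1 hlt
      exact step j hj' a b (ihj hj' a b h)
    · have : k0 = j + 1 := le_antisymm hj hge
      subst this; exact fun a b h => h

lemma exists_stab_index (hm : ∀ t, IsPMF (m t)) (hd0 : ∀ a b, 0 ≤ d0 a b)
    (hrefl : ∀ t, d0 t t = 0) (hsymm : ∀ a b, d0 a b = d0 b a)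
    (hd0t : ∀ a b c, d0 a b = 0 → d0 b c = 0 → d0 a c = 0)
    (hself : ∀ t, q ≤ m t t) (hq : 1 / 2 < q) :
    ∃ k0 ≤ Fintype.card T, ∀ a b,
      costIter m m d0 k0 a b = 0 → costIter m m d0 (k0 + 1) a b = 0 := by
  classical
  by_contra hcon
  push_neg at hcon
  -- setoids
  set s : ℕ → Setoid T := fun k =>
    ⟨fun a b => costIter m m d0 k a b = 0,
      ⟨fun t => costIter_refl hm hd0 hrefl k t,
       fun {a b} h => by rw [costIter_symm hsymm] at h; exact h,
       fun {a b c} h1 h2 => costIter_trans_zero hm hd0 hd0t k a b c h1 h2⟩⟩ with hs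
  haveI : ∀ k, Finite (Quotient (s k)) := fun k => Quotient.finite (s k)
  set c : ℕ → ℕ := fun k => Nat.card (Quotient (s k)) with hc
  have hcard : ∀ k, c k ≤ Fintype.card T := by
    intro k
    have hsur : Function.Surjective (Quotient.mk (s k)) := Quotient.mk_surjective
    calc c k ≤ Nat.card T := Nat.card_le_card_of_surjective _ hsur
      _ = Fintype.card T := Nat.card_eq_fintype_card
  -- the projection map
  have hmono : ∀ k, (s (k + 1)).r ≤ (s k).r := by
    intro k a b hab
    exact costIter_zero_anti hm hd0 hself hq hab
  have hstrict : ∀ k ≤ Fintype.card T, c k < c (k + 1) := by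
    intro k hk
    obtain ⟨a, b, hab, hnab⟩ := hcon k hk
    set φ : Quotient (s (k + 1)) → Quotient (s k) :=
      Quotient.map' id (fun a b hab => hmono k a b hab) with hφ
    have hsur : Function.Surjective φ := by
      intro x
      induction x using Quotient.inductionOn with
      | h t => exact ⟨Quotient.mk'' t, rfl⟩
    have hle : c k ≤ c (k + 1) := Nat.card_le_card_of_surjective φ hsur
    rcases lt_or_eq_of_le hle with h | h
    · exact h
    · exfalso
      have hbij : Function.Bijective φ :=
        (Nat.bijective_iff_surjective_and_card φ).2 ⟨hsur, h.symm⟩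
      have heq : φ (Quotient.mk'' a) = φ (Quotient.mk'' b) := by
        have : (Quotient.mk'' a : Quotient (s k)) = Quotient.mk'' b := Quotient.sound' hab
        simpa [hφ, Quotient.map'_mk''] using this
      have := hbij.1 heq
      have := Quotient.exact' this
      exact hnab this
  have hgrow : ∀ j ≤ Fintype.card T + 1, j ≤ c j := by
    intro j
    induction j with
    | zero => intro _; exact Nat.zero_le _
    | succ j ihj =>
      intro hj
      have hj' : j ≤ Fintype.card T := Nat.lt_succ_iff.1 hj
      have h1 := ihj (le_trans hj' (Nat.le_succ _))
      have h2 := hstrict j hj'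
      omega
  have := hgrow (Fintype.card T + 1) (le_refl _)
  have := hcard (Fintype.card T + 1)
  omega

end AuxStab

section AuxBridge

open Finset

set_option linter.unusedSectionVars false

variable {A B : Type*} [Fintype A] [Fintype B]

/-- Block-diagonal combination of two Markov kernels on the sum type. -/
def sumKernel (mX : A → A → ℝ) (mY : B → B → ℝ) : A ⊕ B → A ⊕ B → ℝ :=
  fun t s => match t, s with
  | Sum.inl a, Sum.inl a' => mX a a'
  | Sum.inr b, Sum.inr b' => mY b b'
  | _, _ => 0

@[simp] lemma sumKernel_inl_inl (mX : A → A → ℝ) (mY : B → B → ℝ) (a a' : A) :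
    sumKernel mX mY (Sum.inl a) (Sum.inl a') = mX a a' := rfl
@[simp] lemma sumKernel_inr_inr (mX : A → A → ℝ) (mY : B → B → ℝ) (b b' : B) :
    sumKernel mX mY (Sum.inr b) (Sum.inr b') = mY b b' := rfl
@[simp] lemma sumKernel_inl_inr (mX : A → A → ℝ) (mY : B → B → ℝ) (a : A) (b : B) :
    sumKernel mX mY (Sum.inl a) (Sum.inr b) = 0 := rfl
@[simp] lemma sumKernel_inr_inl (mX : A → A → ℝ) (mY : B → B → ℝ) (a : A) (b : B) :
    sumKernel mX mY (Sum.inr b) (Sum.inl a) = 0 := rfl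

lemma sumKernel_isPMF {mX : A → A → ℝ} {mY : B → B → ℝ}
    (h1 : ∀ a, IsPMF (mX a)) (h2 : ∀ b, IsPMF (mY b)) :
    ∀ t, IsPMF (sumKernel mX mY t) := by
  intro t
  cases t with
  | inl a =>
    refine ⟨fun s => ?_, ?_⟩
    · cases s with
      | inl a' => exact (h1 a).1 a'
      | inr b => exact le_refl 0
    · rw [Fintype.sum_sum_type]
      simp [(h1 a).2]
  | inr b =>
    refine ⟨fun s => ?_, ?_⟩
    · cases s with
      | inl a' => exact le_refl 0
      | inr b' => exact (h2 b).1 b'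
    · rw [Fintype.sum_sum_type]
      simp [(h2 b).2]

lemma sumKernel_self {mX : A → A → ℝ} {mY : B → B → ℝ} {q : ℝ}
    (h1 : ∀ a, q ≤ mX a a) (h2 : ∀ b, q ≤ mY b b) :
    ∀ t, q ≤ sumKernel mX mY t t := by
  intro t
  cases t with
  | inl a => exact h1 a
  | inr b => exact h2 b

/-- Embedding of a cross coupling into the sum type. -/
def inlrOf (γ : A → B → ℝ) : A ⊕ B → A ⊕ B → ℝ :=
  fun t s => match t, s with
  | Sum.inl a, Sum.inr b => γ a b
  | _, _ => 0

@[simp] lemma inlrOf_inl_inr (γ : A → B → ℝ) (a : A) (b : B) :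
    inlrOf γ (Sum.inl a) (Sum.inr b) = γ a b := rfl
@[simp] lemma inlrOf_inl_inl (γ : A → B → ℝ) (a : A) (a' : A) :
    inlrOf γ (Sum.inl a) (Sum.inl a') = 0 := rfl
@[simp] lemma inlrOf_inr (γ : A → B → ℝ) (b : B) (s : A ⊕ B) :
    inlrOf γ (Sum.inr b) s = 0 := by cases s <;> rfl

lemma costIter_bridge {Z₁ : Type*} [PseudoMetricSpace Z₁]
    (mX : A → A → ℝ) (mY : B → B → ℝ) (ℓX : A → Z₁) (ℓY : B → Z₁) :
    ∀ (k : ℕ) (x : A) (y : B),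
      costIter mX mY (fun x y => dist (ℓX x) (ℓY y)) k x y =
      costIter (sumKernel mX mY) (sumKernel mX mY)
        (fun t s => dist (Sum.elim ℓX ℓY t) (Sum.elim ℓX ℓY s)) k (Sum.inl x) (Sum.inr y) := by
  intro k
  induction k with
  | zero => intro x y; rfl
  | succ k ih =>
    intro x y
    set DXY := costIter mX mY (fun x y => dist (ℓX x) (ℓY y)) k with hDXY
    set DT := costIter (sumKernel mX mY) (sumKernel mX mY)
      (fun t s => dist (Sum.elim ℓX ℓY t) (Sum.elim ℓX ℓY s)) k with hDT
    rw [costIter_succ_eq, costIter_succ_eq, ← hDXY, ← hDT]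
    congr 1
    ext u
    constructor
    · rintro ⟨γ, hγ, rfl⟩
      refine ⟨inlrOf γ, ⟨?_, ?_, ?_⟩, ?_⟩
      · intro t s
        cases t with
        | inl a => cases s with
          | inl a' => simp
          | inr b => simpa using hγ.1 a b
        | inr b => simp
      · intro t
        cases t with
        | inl a =>
          rw [Fintype.sum_sum_type]
          simpa using hγ.2.1 a
        | inr b =>
          rw [Fintype.sum_sum_type]
          simp
      · intro s
        cases s with
        | inl a' =>
          rw [Fintype.sum_sum_type]
          simp
        | inr b =>
          rw [Fintype.sum_sum_type]
          simpa using hγ.2.2 b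
      · rw [Fintype.sum_sum_type]
        have h2 : ∀ b : B, ∑ s, DT (Sum.inr b) s * inlrOf γ (Sum.inr b) s = 0 := by
          intro b
          exact Finset.sum_eq_zero fun s _ => by rw [inlrOf_inr, mul_zero]
        have h1 : ∀ a : A, ∑ s, DT (Sum.inl a) s * inlrOf γ (Sum.inl a) s
            = ∑ b, DXY a b * γ a b := by
          intro a
          rw [Fintype.sum_sum_type]
          have hz : ∀ a' : A, DT (Sum.inl a) (Sum.inl a') * inlrOf γ (Sum.inl a) (Sum.inl a')
              = 0 := by
            intro a'; rw [inlrOf_inl_inl, mul_zero]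
          rw [Finset.sum_congr rfl fun a' _ => hz a', Finset.sum_const, smul_zero, zero_add]
          refine Finset.sum_congr rfl fun b _ => ?_
          rw [inlrOf_inl_inr, ih a b]
        rw [Finset.sum_congr rfl fun b _ => h2 b, Finset.sum_const, smul_zero, add_zero,
          Finset.sum_congr rfl fun a _ => h1 a]
    · rintro ⟨γT, hγT, rfl⟩
      have hrow : ∀ (b : B) (s : A ⊕ B), γT (Sum.inr b) s = 0 := by
        intro b s
        have hsum : ∑ s', γT (Sum.inr b) s' = 0 := by
          rw [hγT.2.1 (Sum.inr b)]; simp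
        exact (Finset.sum_eq_zero_iff_of_nonneg
          (fun s' _ => hγT.1 (Sum.inr b) s')).1 hsum s (Finset.mem_univ s)
      have hcol : ∀ (t : A ⊕ B) (a' : A), γT t (Sum.inl a') = 0 := by
        intro t a'
        have hsum : ∑ t', γT t' (Sum.inl a') = 0 := by
          rw [hγT.2.2 (Sum.inl a')]; simp
        exact (Finset.sum_eq_zero_iff_of_nonneg
          (fun t' _ => hγT.1 t' (Sum.inl a'))).1 hsum t (Finset.mem_univ t)
      refine ⟨fun a b => γT (Sum.inl a) (Sum.inr b), ⟨fun a b => hγT.1 _ _, ?_, ?_⟩, ?_⟩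
      · intro a
        have := hγT.2.1 (Sum.inl a)
        rw [Fintype.sum_sum_type] at this
        simpa [hcol] using this
      · intro b
        have := hγT.2.2 (Sum.inr b)
        rw [Fintype.sum_sum_type] at this
        simpa [hrow] using this
      · rw [Fintype.sum_sum_type]
        have h2 : ∀ b : B, ∑ s, DT (Sum.inr b) s * γT (Sum.inr b) s = 0 := by
          intro b
          exact Finset.sum_eq_zero fun s _ => by rw [hrow b s, mul_zero]
        have h1 : ∀ a : A, ∑ s, DT (Sum.inl a) s * γT (Sum.inl a) s
            = ∑ b, DXY a b * γT (Sum.inl a) (Sum.inr b) := by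
          intro a
          rw [Fintype.sum_sum_type]
          have hz : ∀ a' : A, DT (Sum.inl a) (Sum.inl a') * γT (Sum.inl a) (Sum.inl a') = 0 := by
            intro a'; rw [hcol, mul_zero]
          rw [Finset.sum_congr rfl fun a' _ => hz a', Finset.sum_const, smul_zero, zero_add]
          refine Finset.sum_congr rfl fun b _ => ?_
          rw [ih a b]
        rw [Finset.sum_congr rfl fun b _ => h2 b, Finset.sum_const, smul_zero, add_zero,
          Finset.sum_congr rfl fun a _ => h1 a]

end AuxBridge

section AuxGraph

open Finset

set_option linter.unusedSectionVars false

lemma graphKernel_isPMF {V : Type*} [Fintype V] [DecidableEq V] (G : SimpleGraph V)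
    [DecidableRel G.Adj] {q : ℝ} (hq0 : 0 ≤ q) (hq1 : q ≤ 1) (v : V) :
    IsPMF (graphKernel G q v) := by
  constructor
  · intro v'
    rw [graphKernel]
    split
    · split <;> norm_num
    · rename_i hdeg
      have h1 : (0:ℝ) ≤ if v' = v then q else 0 := by split <;> simp [hq0]
      have h2 : (0:ℝ) ≤ if G.Adj v v' then (1 - q) / (G.degree v : ℝ) else 0 := by
        split
        · exact div_nonneg (by linarith) (Nat.cast_nonneg _)
        · exact le_refl 0
      linarith
  · by_cases hdeg : G.degree v = 0
    · simp [graphKernel, hdeg]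
    · have hsum : ∀ v', graphKernel G q v v'
          = (if v' = v then q else 0) + (if G.Adj v v' then (1 - q) / (G.degree v : ℝ) else 0) := by
        intro v'; rw [graphKernel, if_neg hdeg]
      rw [Finset.sum_congr rfl fun v' _ => hsum v', Finset.sum_add_distrib]
      have e1 : ∑ v', (if v' = v then q else 0) = q := by simp
      have e2 : ∑ v', (if G.Adj v v' then (1 - q) / (G.degree v : ℝ) else 0)
          = (G.degree v : ℝ) * ((1 - q) / (G.degree v : ℝ)) := by
        rw [← Finset.sum_filter]
        rw [show Finset.univ.filter (fun v' => G.Adj v v') = G.neighborFinset v from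
          (SimpleGraph.neighborFinset_eq_filter G (v := v)).symm]
        rw [Finset.sum_const, nsmul_eq_mul, SimpleGraph.card_neighborFinset_eq_degree]
      have hdne : (G.degree v : ℝ) ≠ 0 := Nat.cast_ne_zero.2 hdeg
      rw [e1, e2, mul_div_cancel₀ _ hdne]
      ring

lemma graphKernel_self {V : Type*} [Fintype V] [DecidableEq V] (G : SimpleGraph V)
    [DecidableRel G.Adj] {q : ℝ} (hq1 : q ≤ 1) (v : V) :
    q ≤ graphKernel G q v v := by
  rw [graphKernel]
  split
  · simp [hq1]
  · simp [SimpleGraph.irrefl]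

lemma graphMu_isPMF {V : Type*} [Fintype V] [Nonempty V] (G : SimpleGraph V)
    [DecidableRel G.Adj] : IsPMF (graphMu G) := by
  have hpos : (0:ℝ) < ∑ v', ((max (G.degree v') 1 : ℕ) : ℝ) := by
    refine Finset.sum_pos (fun v' _ => ?_) Finset.univ_nonempty
    exact_mod_cast Nat.lt_of_lt_of_le Nat.zero_lt_one (le_max_right _ 1)
  constructor
  · intro v
    rw [graphMu]
    positivity
  · simp only [graphMu]
    rw [← Finset.sum_div, div_self (ne_of_gt hpos)]

lemma sInf_subset_singleton_zero {S : Set ℝ} (h : S ⊆ {0}) : sInf S = 0 := by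
  rcases Set.subset_singleton_iff_eq.mp h with rfl | rfl
  · exact Real.sInf_empty
  · exact csInf_singleton 0

end AuxGraph

theorem dWL_finite_convergence {V₁ V₂ Z Z₁ : Type*} [Fintype V₁] [Fintype V₂]
    [DecidableEq V₁] [DecidableEq V₂] [MetricSpace Z] [MetricSpace Z₁]
    (g : Z × ℕ × ℕ → Z₁) (hg : Function.Injective g)
    (q : ℝ) (hq0 : 1 / 2 < q) (hq1 : q < 1)
    (G₁ : SimpleGraph V₁) [DecidableRel G₁.Adj] (ℓ₁ : V₁ → Z)
    (G₂ : SimpleGraph V₂) [DecidableRel G₂.Adj] (ℓ₂ : V₂ → Z)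
    (h : ∀ k ≤ Fintype.card V₁ + Fintype.card V₂,
      dWL (graphKernel G₁ q) (graphMu G₁) (relabel G₁ ℓ₁ g)
        (graphKernel G₂ q) (graphMu G₂) (relabel G₂ ℓ₂ g) k = 0) :
    ∀ k : ℕ, dWL (graphKernel G₁ q) (graphMu G₁) (relabel G₁ ℓ₁ g)
        (graphKernel G₂ q) (graphMu G₂) (relabel G₂ ℓ₂ g) k = 0 := by
  intro k
  by_cases hkN : k ≤ Fintype.card V₁ + Fintype.card V₂
  · exact h k hkN
  push_neg at hkN
  cases isEmpty_or_nonempty V₁ with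
  | inl hE1 =>
    rw [dWL_eq]
    apply sInf_subset_singleton_zero
    rintro x ⟨γ, hγ, rfl⟩
    simp
  | inr hne1 =>
    cases isEmpty_or_nonempty V₂ with
    | inl hE2 =>
      rw [dWL_eq]
      apply sInf_subset_singleton_zero
      rintro x ⟨γ, hγ, rfl⟩
      simp
    | inr hne2 =>
      haveI := hne1
      haveI := hne2
      have hq0' : (0:ℝ) ≤ q := by linarith
      have hq1' : q ≤ 1 := le_of_lt hq1
      have hmX : ∀ v, IsPMF (graphKernel G₁ q v) := graphKernel_isPMF G₁ hq0' hq1'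
      have hmY : ∀ v, IsPMF (graphKernel G₂ q v) := graphKernel_isPMF G₂ hq0' hq1'
      have hmT : ∀ t, IsPMF ((sumKernel (graphKernel G₁ q) (graphKernel G₂ q)) t) :=
        sumKernel_isPMF hmX hmY
      have hselfT : ∀ t, q ≤ sumKernel (graphKernel G₁ q) (graphKernel G₂ q) t t :=
        sumKernel_self (graphKernel_self G₁ hq1') (graphKernel_self G₂ hq1')
      have hd0nn : ∀ (a b : V₁ ⊕ V₂),
          0 ≤ dist (Sum.elim (relabel G₁ ℓ₁ g) (relabel G₂ ℓ₂ g) a)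
              (Sum.elim (relabel G₁ ℓ₁ g) (relabel G₂ ℓ₂ g) b) := fun a b => dist_nonneg
      have hrefl : ∀ (t : V₁ ⊕ V₂),
          dist (Sum.elim (relabel G₁ ℓ₁ g) (relabel G₂ ℓ₂ g) t)
              (Sum.elim (relabel G₁ ℓ₁ g) (relabel G₂ ℓ₂ g) t) = 0 := fun t => dist_self _
      have hsymm : ∀ (a b : V₁ ⊕ V₂),
          dist (Sum.elim (relabel G₁ ℓ₁ g) (relabel G₂ ℓ₂ g) a)
              (Sum.elim (relabel G₁ ℓ₁ g) (relabel G₂ ℓ₂ g) b)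
          = dist (Sum.elim (relabel G₁ ℓ₁ g) (relabel G₂ ℓ₂ g) b)
              (Sum.elim (relabel G₁ ℓ₁ g) (relabel G₂ ℓ₂ g) a) := fun a b => dist_comm _ _
      have htrans : ∀ (a b c : V₁ ⊕ V₂),
          dist (Sum.elim (relabel G₁ ℓ₁ g) (relabel G₂ ℓ₂ g) a)
              (Sum.elim (relabel G₁ ℓ₁ g) (relabel G₂ ℓ₂ g) b) = 0 →
          dist (Sum.elim (relabel G₁ ℓ₁ g) (relabel G₂ ℓ₂ g) b)
              (Sum.elim (relabel G₁ ℓ₁ g) (relabel G₂ ℓ₂ g) c) = 0 →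
          dist (Sum.elim (relabel G₁ ℓ₁ g) (relabel G₂ ℓ₂ g) a)
              (Sum.elim (relabel G₁ ℓ₁ g) (relabel G₂ ℓ₂ g) c) = 0 := by
        intro a b c h1 h2
        rw [dist_eq_zero] at h1 h2 ⊢
        rw [h1, h2]
      obtain ⟨k0, hk0le, hstab0⟩ := exists_stab_index
        (m := sumKernel (graphKernel G₁ q) (graphKernel G₂ q))
        (d0 := fun t s => dist (Sum.elim (relabel G₁ ℓ₁ g) (relabel G₂ ℓ₂ g) t)
          (Sum.elim (relabel G₁ ℓ₁ g) (relabel G₂ ℓ₂ g) s))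
        (q := q) hmT hd0nn hrefl hsymm htrans hselfT hq0
      have hcardT : Fintype.card (V₁ ⊕ V₂) = Fintype.card V₁ + Fintype.card V₂ :=
        Fintype.card_sum
      have hk0N : k0 ≤ Fintype.card V₁ + Fintype.card V₂ := by rw [← hcardT]; exact hk0le
      have hkk0 : k0 ≤ k := le_trans hk0N (le_of_lt hkN)
      have hchain := costIter_stable_chain
        (m := sumKernel (graphKernel G₁ q) (graphKernel G₂ q))
        (d0 := fun t s => dist (Sum.elim (relabel G₁ ℓ₁ g) (relabel G₂ ℓ₂ g) t)
          (Sum.elim (relabel G₁ ℓ₁ g) (relabel G₂ ℓ₂ g) s))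
        hmT hd0nn hstab0
      have hb := costIter_bridge (graphKernel G₁ q) (graphKernel G₂ q)
        (relabel G₁ ℓ₁ g) (relabel G₂ ℓ₂ g)
      have hDXYnn : ∀ (j : ℕ) (x : V₁) (y : V₂),
          0 ≤ costIter (graphKernel G₁ q) (graphKernel G₂ q)
            (fun x y => dist (relabel G₁ ℓ₁ g x) (relabel G₂ ℓ₂ g y)) j x y :=
        costIter_nonneg (fun x y => dist_nonneg)
      obtain ⟨C, hC0, hdom⟩ := exists_dom (ι := V₁ × V₂)
        (f := fun p => costIter (graphKernel G₁ q) (graphKernel G₂ q)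
          (fun x y => dist (relabel G₁ ℓ₁ g x) (relabel G₂ ℓ₂ g y)) k p.1 p.2)
        (g := fun p => costIter (graphKernel G₁ q) (graphKernel G₂ q)
          (fun x y => dist (relabel G₁ ℓ₁ g x) (relabel G₂ ℓ₂ g y)) k0 p.1 p.2)
        (fun p => hDXYnn k _ _) (fun p => hDXYnn k0 _ _)
        (fun p hp => by
          have hp' : costIter (graphKernel G₁ q) (graphKernel G₂ q)
              (fun x y => dist (relabel G₁ ℓ₁ g x) (relabel G₂ ℓ₂ g y)) k0 p.1 p.2 = 0 := hp
          show costIter (graphKernel G₁ q) (graphKernel G₂ q)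
              (fun x y => dist (relabel G₁ ℓ₁ g x) (relabel G₂ ℓ₂ g y)) k p.1 p.2 = 0
          rw [hb k p.1 p.2]
          refine hchain k hkk0 _ _ ?_
          rw [← hb k0 p.1 p.2]
          exact hp')
      rw [dWL_eq]
      refine sInf_costSet_eq_zero_of_dom hC0 (fun x y => hdom (x, y)) (hDXYnn k) (hDXYnn k0)
        (graphMu_isPMF G₁) (graphMu_isPMF G₂) ?_
      rw [← dWL_eq]
      exact h k0 hk0N

end WLGW
end

section
/- For any Z-LMMCs (𝒳, ℓ_X) and (𝒴, ℓ_Y) and any integer k ≥ 1, the lower-bound distance satisfies d_WLLB^(k)((𝒳,ℓ_X),(𝒴,ℓ_Y)) ≤ d_WL^(k)((𝒳,ℓ_X),(𝒴,ℓ_Y)). -/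
open scoped BigOperators NNReal

namespace WLGW

variable {X Y W : Type*}

lemma sum4_swap {A B C D : Type*} [Fintype A] [Fintype B] [Fintype C] [Fintype D]
    (f : A → B → C → D → ℝ) :
    ∑ a, ∑ b, ∑ c, ∑ d, f a b c d = ∑ c, ∑ d, ∑ a, ∑ b, f a b c d := by
  have h1 : ∀ a : A, ∑ b, ∑ c, ∑ d, f a b c d = ∑ c, ∑ b, ∑ d, f a b c d :=
    fun a => Finset.sum_comm
  simp_rw [h1]
  rw [Finset.sum_comm]
  refine Finset.sum_congr rfl fun c _ => ?_
  have h2 : ∀ a : A, ∑ b, ∑ d, f a b c d = ∑ d, ∑ b, f a b c d :=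
    fun a => Finset.sum_comm
  simp_rw [h2]
  rw [Finset.sum_comm]

lemma prodCoupling [Fintype X] [Fintype Y] {p : X → ℝ} {q : Y → ℝ}
    (hp : IsPMF p) (hq : IsPMF q) : IsCoupling p q (fun x y => p x * q y) := by
  refine ⟨fun x y => mul_nonneg (hp.1 x) (hq.1 y), fun x => ?_, fun y => ?_⟩
  · rw [← Finset.mul_sum, hq.2, mul_one]
  · rw [← Finset.sum_mul, hp.2, one_mul]

lemma kpow_pmf [Fintype X] [DecidableEq X] {m : X → X → ℝ}
    (hm : ∀ x, IsPMF (m x)) : ∀ k x, IsPMF (kpow m k x) := by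
  intro k
  induction k with
  | zero =>
    intro x
    refine ⟨fun x' => ?_, ?_⟩
    · simp only [kpow]; split <;> norm_num
    · simp [kpow]
  | succ k ih =>
    intro x
    refine ⟨fun x'' => Finset.sum_nonneg fun x' _ =>
      mul_nonneg ((ih x').1 x'') ((hm x).1 x'), ?_⟩
    show ∑ x'', ∑ x', kpow m k x' x'' * m x x' = 1
    rw [Finset.sum_comm]
    have : ∀ x' : X, ∑ x'', kpow m k x' x'' * m x x' = m x x' := by
      intro x'
      rw [← Finset.sum_mul, (ih x').2, one_mul]
    simp_rw [this]
    exact (hm x).2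

lemma wcost_nonneg {Z : Type*} [PseudoMetricSpace Z] [Fintype X] [Fintype Y]
    (ℓX : X → Z) (ℓY : Y → Z) (p : X → ℝ) (q : Y → ℝ) :
    0 ≤ wassersteinCost ℓX ℓY p q := by
  apply Real.sInf_nonneg
  rintro r ⟨γ, hγ, rfl⟩
  exact Finset.sum_nonneg fun x _ => Finset.sum_nonneg fun y _ =>
    mul_nonneg dist_nonneg (hγ.1 x y)

lemma wcost_le_costIter {Z : Type*} [MetricSpace Z] [Fintype X] [Fintype Y]
    [DecidableEq X] [DecidableEq Y]
    (mX : X → X → ℝ) (mY : Y → Y → ℝ) (ℓX : X → Z) (ℓY : Y → Z)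
    (hmX : ∀ x, IsPMF (mX x)) (hmY : ∀ y, IsPMF (mY y)) :
    ∀ (k : ℕ) (x : X) (y : Y),
      wassersteinCost ℓX ℓY (kpow mX k x) (kpow mY k y) ≤
        costIter mX mY (fun x y => dist (ℓX x) (ℓY y)) k x y := by
  intro k
  induction k with
  | zero =>
    intro x y
    apply csInf_le
    · exact ⟨0, by rintro r ⟨γ, hγ, rfl⟩; exact Finset.sum_nonneg fun a _ =>
        Finset.sum_nonneg fun b _ => mul_nonneg dist_nonneg (hγ.1 a b)⟩
    · refine ⟨fun a b => kpow mX 0 x a * kpow mY 0 y b,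
        prodCoupling (kpow_pmf hmX 0 x) (kpow_pmf hmY 0 y), ?_⟩
      show (costIter mX mY (fun x y => dist (ℓX x) (ℓY y)) 0 x y) = _
      show dist (ℓX x) (ℓY y) = _
      simp [kpow, Finset.sum_ite_eq, mul_ite]
  | succ k ih =>
    intro x y
    apply le_csInf
    · exact ⟨_, fun a b => mX x a * mY y b, prodCoupling (hmX x) (hmY y), rfl⟩
    rintro r ⟨ν, hν, rfl⟩
    -- show wcost (kpow (k+1)) ≤ ∑∑ costIter k * ν
    apply le_of_forall_pos_le_add
    intro ε hε
    -- choose near-optimal couplings for each (x', y')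
    have hchoice : ∀ (x' : X) (y' : Y), ∃ g : X → Y → ℝ,
        IsCoupling (kpow mX k x') (kpow mY k y') g ∧
        ∑ a, ∑ b, dist (ℓX a) (ℓY b) * g a b <
          wassersteinCost ℓX ℓY (kpow mX k x') (kpow mY k y') + ε := by
      intro x' y'
      have hne : {r : ℝ | ∃ γ : X → Y → ℝ, IsCoupling (kpow mX k x') (kpow mY k y') γ ∧
          r = ∑ a, ∑ b, dist (ℓX a) (ℓY b) * γ a b}.Nonempty :=
        ⟨_, fun a b => kpow mX k x' a * kpow mY k y' b,
          prodCoupling (kpow_pmf hmX k x') (kpow_pmf hmY k y'), rfl⟩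
      obtain ⟨r, ⟨g, hg, rfl⟩, hlt⟩ := Real.lt_sInf_add_pos hne hε
      exact ⟨g, hg, hlt⟩
    choose g hg hgcost using hchoice
    -- mixture coupling
    set γ : X → Y → ℝ := fun a b => ∑ x', ∑ y', g x' y' a b * ν x' y' with hγdef
    have hνsum : ∑ x', ∑ y', ν x' y' = 1 := by
      have : ∀ x', ∑ y', ν x' y' = mX x x' := hν.2.1
      simp_rw [this]; exact (hmX x).2
    have hγ : IsCoupling (kpow mX (k+1) x) (kpow mY (k+1) y) γ := by
      refine ⟨fun a b => Finset.sum_nonneg fun x' _ => Finset.sum_nonneg fun y' _ =>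
        mul_nonneg ((hg x' y').1 a b) (hν.1 x' y'), fun a => ?_, fun b => ?_⟩
      · rw [Finset.sum_comm]
        have h1 : ∀ x', ∑ b, ∑ y', g x' y' a b * ν x' y'
            = kpow mX k x' a * mX x x' := by
          intro x'
          rw [Finset.sum_comm]
          have : ∀ y', ∑ b, g x' y' a b * ν x' y' = kpow mX k x' a * ν x' y' := by
            intro y'; rw [← Finset.sum_mul, (hg x' y').2.1]
          simp_rw [this, ← Finset.mul_sum, hν.2.1]
        simp_rw [h1]
        rfl
      · rw [Finset.sum_comm]
        have h1 : ∀ x', ∑ a, ∑ y', g x' y' a b * ν x' y'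
            = ∑ y', kpow mY k y' b * ν x' y' := by
          intro x'
          rw [Finset.sum_comm]
          refine Finset.sum_congr rfl fun y' _ => ?_
          rw [← Finset.sum_mul, (hg x' y').2.2]
        simp_rw [h1]
        rw [Finset.sum_comm]
        have h2 : ∀ y', ∑ x', kpow mY k y' b * ν x' y' = kpow mY k y' b * mY y y' := by
          intro y'; rw [← Finset.mul_sum]
          congr 1
          have := hν.2.2 y'
          exact this
        simp_rw [h2]
        rfl
    have hmem : (∑ a, ∑ b, dist (ℓX a) (ℓY b) * γ a b) ∈
        {r : ℝ | ∃ γ' : X → Y → ℝ, IsCoupling (kpow mX (k+1) x) (kpow mY (k+1) y) γ' ∧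
          r = ∑ a, ∑ b, dist (ℓX a) (ℓY b) * γ' a b} := ⟨γ, hγ, rfl⟩
    have hbdd : BddBelow {r : ℝ | ∃ γ' : X → Y → ℝ,
        IsCoupling (kpow mX (k+1) x) (kpow mY (k+1) y) γ' ∧
        r = ∑ a, ∑ b, dist (ℓX a) (ℓY b) * γ' a b} :=
      ⟨0, by rintro r ⟨γ', hγ', rfl⟩; exact Finset.sum_nonneg fun a _ =>
        Finset.sum_nonneg fun b _ => mul_nonneg dist_nonneg (hγ'.1 a b)⟩
    calc wassersteinCost ℓX ℓY (kpow mX (k+1) x) (kpow mY (k+1) y)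
        ≤ ∑ a, ∑ b, dist (ℓX a) (ℓY b) * γ a b := csInf_le hbdd hmem
      _ = ∑ x', ∑ y', (∑ a, ∑ b, dist (ℓX a) (ℓY b) * g x' y' a b) * ν x' y' := by
          simp_rw [hγdef, Finset.mul_sum, Finset.sum_mul, mul_assoc]
          exact sum4_swap _
      _ ≤ ∑ x', ∑ y', (costIter mX mY (fun x y => dist (ℓX x) (ℓY y)) k x' y' + ε)
            * ν x' y' := by
          refine Finset.sum_le_sum fun x' _ => Finset.sum_le_sum fun y' _ => ?_
          exact mul_le_mul_of_nonneg_right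
            (le_of_lt (lt_of_lt_of_le (hgcost x' y')
              (add_le_add (ih x' y') le_rfl))) (hν.1 x' y')
      _ = (∑ x', ∑ y', costIter mX mY (fun x y => dist (ℓX x) (ℓY y)) k x' y' * ν x' y')
            + ε := by
          have hsplit : ∑ x', ∑ y',
              (costIter mX mY (fun x y => dist (ℓX x) (ℓY y)) k x' y' + ε) * ν x' y'
              = (∑ x', ∑ y', costIter mX mY (fun x y => dist (ℓX x) (ℓY y)) k x' y'
                  * ν x' y') + ε * ∑ x', ∑ y', ν x' y' := by
            simp_rw [add_mul, Finset.sum_add_distrib, Finset.mul_sum]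
          rw [hsplit, hνsum, mul_one]

theorem dWLLB_le_dWL {X Y Z : Type*} [Fintype X] [Fintype Y] [DecidableEq X] [DecidableEq Y]
    [MetricSpace Z]
    (mX : X → X → ℝ) (μX : X → ℝ) (ℓX : X → Z)
    (mY : Y → Y → ℝ) (μY : Y → ℝ) (ℓY : Y → Z)
    (hX : IsMMC mX μX) (hY : IsMMC mY μY) (k : ℕ) (hk : 1 ≤ k) :
    dWLLB mX μX ℓX mY μY ℓY k ≤ dWL mX μX ℓX mY μY ℓY k := by
  apply le_csInf
  · exact ⟨_, fun x y => μX x * μY y, prodCoupling hX.2.1 hY.2.1, rfl⟩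
  rintro r ⟨γ, hγ, rfl⟩
  have hbdd : BddBelow {r : ℝ | ∃ γ' : X → Y → ℝ, IsCoupling μX μY γ' ∧
      r = ∑ x, ∑ y, wassersteinCost ℓX ℓY (kpow mX k x) (kpow mY k y) * γ' x y} :=
    ⟨0, by rintro r ⟨γ', hγ', rfl⟩; exact Finset.sum_nonneg fun x _ =>
      Finset.sum_nonneg fun y _ =>
        mul_nonneg (wcost_nonneg ℓX ℓY _ _) (hγ'.1 x y)⟩
  calc dWLLB mX μX ℓX mY μY ℓY k
      ≤ ∑ x, ∑ y, wassersteinCost ℓX ℓY (kpow mX k x) (kpow mY k y) * γ x y :=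
        csInf_le hbdd ⟨γ, hγ, rfl⟩
    _ ≤ ∑ x, ∑ y, costIter mX mY (fun x y => dist (ℓX x) (ℓY y)) k x y * γ x y := by
        refine Finset.sum_le_sum fun x _ => Finset.sum_le_sum fun y _ => ?_
        exact mul_le_mul_of_nonneg_right
          (wcost_le_costIter mX mY ℓX ℓY hX.1 hY.1 k x y) (hγ.1 x y)

end WLGW
end
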